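/- Let r > 0 be a real number such that r² is irrational, and let y > 0 be real. For (m,w) ∈ ℤ×ℤ set p_L = m/r + w·r and p_R = m/r − w·r. Then the function T ↦ Σ_{(m,w)∈ℤ×ℤ} exp(−(π/2)(T·p_L² + y·p_R²)) tends to 1 as the real variable T tends to +∞. -/

import Mathlib

open Filter Real

set_option maxHeartbeats 1000000

lemma summable_int_exp_neg_sq {c : ℝ} (hc : 0 < c) :
    Summable fun n : ℤ => Real.exp (-c * (n : ℝ) ^ 2) := by
  have h := summable_pow_mul_jacobiTheta₂_term_bound 0 (T := c / π)
    (div_pos hc Real.pi_pos) 0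
  refine h.of_nonneg_of_le (fun n => (Real.exp_pos _).le) fun n => ?_
  simp only [pow_zero, one_mul, mul_zero, zero_mul, sub_zero]
  apply le_of_eq
  congr 1
  field_simp

lemma pL_ne_zero {r : ℝ} (hr : 0 < r) (hirr : Irrational (r ^ 2))
    {p : ℤ × ℤ} (hp : p ≠ (0, 0)) : (p.1 : ℝ) / r + (p.2 : ℝ) * r ≠ 0 := by
  intro h
  have hr0 : r ≠ 0 := ne_of_gt hr
  have hmr : (p.1 : ℝ) + (p.2 : ℝ) * r ^ 2 = 0 := by
    have := congrArg (· * r) h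
    field_simp at this
    nlinarith [this]
  rcases eq_or_ne p.2 0 with hw | hw
  · have hm : (p.1 : ℝ) = 0 := by rw [hw] at hmr; push_cast at hmr; linarith
    have : p.1 = 0 := by exact_mod_cast hm
    exact hp (Prod.ext this hw)
  · apply hirr
    refine ⟨(-p.1 : ℚ) / (p.2 : ℚ), ?_⟩
    have hw' : ((p.2 : ℝ)) ≠ 0 := Int.cast_ne_zero.mpr hw
    push_cast
    field_simp
    linarith

/-- At irrational `r²`, the solitonic sum over the Narain lattice projects in the `T → ∞`
limit onto the single lattice point `(m, w) = (0, 0)`, giving `1`. -/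
theorem stmt_14 (r : ℝ) (hr : 0 < r) (hirr : Irrational (r ^ 2)) (y : ℝ) (hy : 0 < y) :
    Filter.Tendsto
      (fun T : ℝ => ∑' p : ℤ × ℤ,
        Real.exp (-(Real.pi / 2) *
          (T * ((p.1 : ℝ) / r + (p.2 : ℝ) * r) ^ 2 + y * ((p.1 : ℝ) / r - (p.2 : ℝ) * r) ^ 2)))
      Filter.atTop (nhds 1) := by
  classical
  set a : ℝ := Real.pi / 2 with ha
  have ha0 : 0 < a := by positivity
  set c : ℝ := min 1 y with hc
  have hc0 : 0 < c := lt_min one_pos hy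
  -- the dominating function
  set bound : ℤ × ℤ → ℝ := fun p =>
    Real.exp (-(2 * a * c / r ^ 2) * (p.1 : ℝ) ^ 2) *
      Real.exp (-(2 * a * c * r ^ 2) * (p.2 : ℝ) ^ 2) with hbound
  have hsum : Summable bound := by
    exact (summable_int_exp_neg_sq (by positivity)).mul_of_nonneg
      (summable_int_exp_neg_sq (by positivity))
      (fun n => (Real.exp_pos _).le) (fun n => (Real.exp_pos _).le)
  -- the pointwise limit
  set g : ℤ × ℤ → ℝ := fun p => if p = (0, 0) then 1 else 0 with hg
  have hgsum : ∑' p : ℤ × ℤ, g p = 1 := tsum_ite_eq (0, 0) 1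
  have key := tendsto_tsum_of_dominated_convergence (𝓕 := atTop)
    (f := fun (T : ℝ) (p : ℤ × ℤ) =>
      Real.exp (-a *
        (T * ((p.1 : ℝ) / r + (p.2 : ℝ) * r) ^ 2 + y * ((p.1 : ℝ) / r - (p.2 : ℝ) * r) ^ 2)))
    (g := g) (bound := bound) hsum ?_ ?_
  · rw [hgsum] at key
    exact key
  · -- pointwise convergence
    intro p
    rcases eq_or_ne p ((0 : ℤ), (0 : ℤ)) with rfl | hp
    · simp only [hg, if_pos rfl]
      have : ∀ T : ℝ, Real.exp (-a *
          (T * (((0 : ℤ) : ℝ) / r + ((0 : ℤ) : ℝ) * r) ^ 2 +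
            y * (((0 : ℤ) : ℝ) / r - ((0 : ℤ) : ℝ) * r) ^ 2)) = 1 := by
        intro T
        simp
      simpa [this] using tendsto_const_nhds (α := ℝ) (f := atTop) (a := (1 : ℝ))
    · simp only [hg, if_neg hp]
      have hpl : ((p.1 : ℝ) / r + (p.2 : ℝ) * r) ≠ 0 := pL_ne_zero hr hirr hp
      have hpl2 : 0 < ((p.1 : ℝ) / r + (p.2 : ℝ) * r) ^ 2 := by positivity
      have hlin : Tendsto (fun T : ℝ =>
          -a * (T * ((p.1 : ℝ) / r + (p.2 : ℝ) * r) ^ 2 +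
            y * ((p.1 : ℝ) / r - (p.2 : ℝ) * r) ^ 2)) atTop atBot := by
        have h1 : Tendsto (fun T : ℝ =>
            T * ((p.1 : ℝ) / r + (p.2 : ℝ) * r) ^ 2 +
              y * ((p.1 : ℝ) / r - (p.2 : ℝ) * r) ^ 2) atTop atTop := by
          apply tendsto_atTop_add_const_right
          exact tendsto_id.atTop_mul_const hpl2
        exact (Filter.tendsto_const_mul_atBot_of_neg (by linarith : -a < 0)).2 h1
      exact Real.tendsto_exp_atBot.comp hlin
  · -- eventual bound
    filter_upwards [eventually_ge_atTop (1 : ℝ)] with T hT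
    intro p
    rw [Real.norm_eq_abs, abs_of_pos (Real.exp_pos _)]
    simp only [hbound]
    rw [← Real.exp_add]
    apply Real.exp_le_exp.mpr
    have hr2 : (0 : ℝ) < r ^ 2 := by positivity
    set L : ℝ := (p.1 : ℝ) / r + (p.2 : ℝ) * r with hL
    set R : ℝ := (p.1 : ℝ) / r - (p.2 : ℝ) * r with hR
    have hsq : L ^ 2 + R ^ 2 = 2 * ((p.1 : ℝ) ^ 2 / r ^ 2 + (p.2 : ℝ) ^ 2 * r ^ 2) := by
      rw [hL, hR]
      field_simp
      ring
    have h1 : c * (L ^ 2 + R ^ 2) ≤ T * L ^ 2 + y * R ^ 2 := by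
      have hcy : c ≤ y := min_le_right 1 y
      have hc1 : c ≤ 1 := min_le_left 1 y
      nlinarith [sq_nonneg L, sq_nonneg R]
    have h2 : -(2 * a * c / r ^ 2) * (p.1 : ℝ) ^ 2 + -(2 * a * c * r ^ 2) * (p.2 : ℝ) ^ 2
        = -a * (c * (L ^ 2 + R ^ 2)) := by
      rw [hsq]
      field_simp
      ring
    rw [h2]
    nlinarith [h1, ha0]
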